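/- arXiv:1008.4569 — 4 statements merged into one kernel-verified Lean document; each statement's English description precedes it below -/
import Mathlib

section
/- Let P₁ and P₂ be families of nonempty sets (P₁)_t, (P₂)_t ⊂ C([0,∞); E₀) indexed by t ∈ ℝ, each (Pᵢ)_t compact in C([0,∞); E₀). Suppose both P₁ and P₂ are pullback D-attracting for a trajectory brochette H⁺, i.e. for every D ∈ D and t ∈ ℝ, sup_{u∈H_τ(D)} inf_{v∈(Pᵢ)_t} ‖T(t−τ)u − v‖_{C([0,∞);E₀)} → 0 as τ → −∞. Then the intersection brochette (P₁ ∩ P₂)_t = (P₁)_t ∩ (P₂)_t is also pullback D-attracting. -/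
/-- `X` plays the role of the metric space `C([0,∞); E₀)` of trajectories,
`T h` the translation operator, `ev0 u` the value `u(0) ∈ E`,
`H τ` the trajectory space `H⁺_τ`, and `𝒟` the class of brochettes over `E`.
A brochette `P` is pullback `𝒟`-attracting if for every `D ∈ 𝒟`, `t ∈ ℝ` and `ε > 0`,
for all `τ` close enough to `-∞` every `u ∈ H_τ(D)` satisfies
`inf_{v ∈ P_t} dist (T(t-τ)u) v < ε`. -/
lemma key_inter {X : Type*} [MetricSpace X] {K₁ K₂ : Set X} (h1 : IsCompact K₁)
    (h2 : IsCompact K₂) {ε : ℝ} (hε : 0 < ε) :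
    ∃ δ > 0, ∀ x : X, (∃ v ∈ K₁, dist x v < δ) → (∃ v ∈ K₂, dist x v < δ) →
      ∃ v ∈ K₁ ∩ K₂, dist x v < ε := by
  by_contra h
  push_neg at h
  have h' : ∀ n : ℕ, ∃ x : X, (∃ v ∈ K₁, dist x v < 1 / (n + 1)) ∧
      (∃ v ∈ K₂, dist x v < 1 / (n + 1)) ∧ ∀ v ∈ K₁ ∩ K₂, ε ≤ dist x v := by
    intro n
    obtain ⟨x, hx1, hx2, hx3⟩ := h (1 / (n + 1)) (by positivity)
    exact ⟨x, hx1, hx2, hx3⟩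
  choose x hx1 hx2 hx3 using h'
  choose v₁ hv₁ hd₁ using hx1
  choose v₂ hv₂ hd₂ using hx2
  obtain ⟨p, hp, φ, hφ, hconv⟩ := h1.tendsto_subseq hv₁
  have hlim : Filter.Tendsto (fun n : ℕ => (1 : ℝ) / (n + 1)) Filter.atTop (nhds 0) :=
    tendsto_one_div_add_atTop_nhds_zero_nat
  have hlimφ : Filter.Tendsto (fun n : ℕ => (1 : ℝ) / (φ n + 1)) Filter.atTop (nhds 0) :=
    hlim.comp hφ.tendsto_atTop
  -- x (φ n) → p
  have hxp : Filter.Tendsto (fun n => x (φ n)) Filter.atTop (nhds p) := by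
    rw [tendsto_iff_dist_tendsto_zero]
    have : ∀ n, dist (x (φ n)) p ≤ 1 / (φ n + 1) + dist (v₁ (φ n)) p := fun n =>
      (dist_triangle _ (v₁ (φ n)) p).trans (by
        have := (hd₁ (φ n)).le; linarith)
    refine squeeze_zero (fun n => dist_nonneg) this ?_
    have : Filter.Tendsto (fun n => dist (v₁ (φ n)) p) Filter.atTop (nhds 0) :=
      tendsto_iff_dist_tendsto_zero.mp hconv
    simpa using hlimφ.add this
  -- v₂ (φ n) → p
  have hv2p : Filter.Tendsto (fun n => v₂ (φ n)) Filter.atTop (nhds p) := by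
    rw [tendsto_iff_dist_tendsto_zero]
    have hb : ∀ n, dist (v₂ (φ n)) p ≤ 1 / (φ n + 1) + dist (x (φ n)) p := by
      intro n
      have h1 := (hd₂ (φ n)).le
      have h2 : dist (v₂ (φ n)) (x (φ n)) ≤ 1 / (φ n + 1) := by
        rw [dist_comm]; exact h1
      calc dist (v₂ (φ n)) p ≤ dist (v₂ (φ n)) (x (φ n)) + dist (x (φ n)) p :=
            dist_triangle _ _ _
        _ ≤ 1 / (φ n + 1) + dist (x (φ n)) p := by linarith
    refine squeeze_zero (fun n => dist_nonneg) hb ?_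
    have hx0 : Filter.Tendsto (fun n => dist (x (φ n)) p) Filter.atTop (nhds 0) :=
      tendsto_iff_dist_tendsto_zero.mp hxp
    simpa using hlimφ.add hx0
  have hpK₂ : p ∈ K₂ := h2.isClosed.mem_of_tendsto hv2p
    (Filter.Eventually.of_forall fun n => hv₂ (φ n))
  have hεle : ∀ n, ε ≤ dist (x (φ n)) p := fun n => hx3 (φ n) p ⟨hp, hpK₂⟩
  have h0 : Filter.Tendsto (fun n => dist (x (φ n)) p) Filter.atTop (nhds 0) :=
    tendsto_iff_dist_tendsto_zero.mp hxp
  have := ge_of_tendsto h0 (Filter.Eventually.of_forall hεle)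
  linarith

def PullbackAttracting {X E : Type*} [MetricSpace X]
    (T : ℝ → X → X) (ev0 : X → E) (H : ℝ → Set X) (𝒟 : Set (ℝ → Set E))
    (P : ℝ → Set X) : Prop :=
  ∀ D ∈ 𝒟, ∀ t : ℝ, ∀ ε > (0:ℝ), ∃ τ₁ : ℝ, ∀ τ ≤ τ₁,
    ∀ u ∈ {u ∈ H τ | ev0 u ∈ D τ}, ∃ v ∈ P t, dist (T (t - τ) u) v < ε

/-- Lemma 3.12(b): the intersection of two pullback `𝒟`-attracting brochettes with
compact sections is again pullback `𝒟`-attracting. -/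
theorem stmt2 {X E : Type*} [MetricSpace X]
    (T : ℝ → X → X) (ev0 : X → E) (H : ℝ → Set X) (𝒟 : Set (ℝ → Set E))
    (P₁ P₂ : ℝ → Set X)
    (hc1 : ∀ t, IsCompact (P₁ t)) (hc2 : ∀ t, IsCompact (P₂ t))
    (ha1 : PullbackAttracting T ev0 H 𝒟 P₁)
    (ha2 : PullbackAttracting T ev0 H 𝒟 P₂) :
    PullbackAttracting T ev0 H 𝒟 (fun t => P₁ t ∩ P₂ t) := by
  intro D hD t ε hε
  obtain ⟨δ, hδ, hkey⟩ := key_inter (hc1 t) (hc2 t) hε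
  obtain ⟨τ₁, hτ₁⟩ := ha1 D hD t δ hδ
  obtain ⟨τ₂, hτ₂⟩ := ha2 D hD t δ hδ
  refine ⟨min τ₁ τ₂, fun τ hτ u hu => ?_⟩
  exact hkey _ (hτ₁ τ (hτ.trans (min_le_left _ _)) u hu)
    (hτ₂ τ (hτ.trans (min_le_right _ _)) u hu)
end

section
/- A minimal pullback trajectory D-semiattractor is a minimal pullback trajectory D-attractor: if U is a brochette that is a pullback trajectory D-semiattractor (T-compact, T(h)U ⊂ U for h ≥ 0, pullback D-attracting) and is contained in every pullback trajectory D-semiattractor, then T(h)U = U for all h ≥ 0. -/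
/-- `X` models the trajectory space `C([0,∞);E₀)` (with its Fréchet metric), `evE u s`
is the value `u(s) ∈ E`, `T` the translation semigroup, `H` the trajectory brochette,
`𝒟` a class of brochettes over `E`.  A brochette `P` is `𝒯`-compact if each `P_t` is
compact and trajectories in `P_t` are bounded in `E` by a continuous function `φ(t,·)`. -/
def TCompact {X E : Type*} [MetricSpace X] [NormedAddCommGroup E]
    (evE : X → ℝ → E) (P : ℝ → Set X) : Prop :=
  (∀ t, IsCompact (P t)) ∧
    ∃ φ : ℝ → ℝ → ℝ, (∀ t, Continuous (φ t)) ∧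
      ∀ t, ∀ u ∈ P t, ∀ s : ℝ, 0 ≤ s → ‖evE u s‖ ≤ φ t s

/-- Pullback trajectory `𝒟`-semiattractor: `𝒯`-compact, shift semi-invariant
(`T(h)P_{t-h} ⊆ P_t` for `h ≥ 0`), and pullback `𝒟`-attracting. -/
def IsPTSA {X E : Type*} [MetricSpace X] [NormedAddCommGroup E]
    (T : ℝ → X → X) (evE : X → ℝ → E) (H : ℝ → Set X) (𝒟 : Set (ℝ → Set E))
    (P : ℝ → Set X) : Prop :=
  TCompact evE P ∧
    (∀ h : ℝ, 0 ≤ h → ∀ t : ℝ, T h '' P (t - h) ⊆ P t) ∧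
    PullbackAttracting T (fun u => evE u 0) H 𝒟 P

/-- Lemma 3.14: a minimal pullback trajectory `𝒟`-semiattractor is a pullback
trajectory `𝒟`-attractor, i.e. it satisfies `T(h)U_{t-h} = U_t` for all `h ≥ 0`. -/
theorem stmt6 {X E : Type*} [MetricSpace X] [NormedAddCommGroup E]
    (T : ℝ → X → X) (evE : X → ℝ → E) (H : ℝ → Set X) (𝒟 : Set (ℝ → Set E))
    (hsemi : ∀ a b : ℝ, 0 ≤ a → 0 ≤ b → ∀ u, T a (T b u) = T (a + b) u)
    (hcont : ∀ h : ℝ, 0 ≤ h → Continuous (T h))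
    (hlip : ∀ h : ℝ, 0 ≤ h → ∃ C > (0:ℝ), ∀ u v, dist (T h u) (T h v) ≤ C * dist u v)
    (hev : ∀ h : ℝ, 0 ≤ h → ∀ u, ∀ s : ℝ, 0 ≤ s → evE (T h u) s = evE u (s + h))
    (U : ℝ → Set X)
    (hU : IsPTSA T evE H 𝒟 U)
    (hmin : ∀ P : ℝ → Set X, IsPTSA T evE H 𝒟 P → ∀ t, U t ⊆ P t) :
    ∀ h : ℝ, 0 ≤ h → ∀ t : ℝ, T h '' U (t - h) = U t := by
  intro h hh t
  set P : ℝ → Set X := fun t => T h '' U (t - h) with hP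
  obtain ⟨⟨hcomp, φ, hφc, hφb⟩, hinv, hattr⟩ := hU
  have hPTSA : IsPTSA T evE H 𝒟 P := by
    refine ⟨⟨fun t => (hcomp (t - h)).image (hcont h hh), ?_⟩, ?_, ?_⟩
    · refine ⟨fun t s => φ (t - h) (s + h), fun t =>
        (hφc (t - h)).comp (continuous_id.add continuous_const), ?_⟩
      rintro t u ⟨w, hw, rfl⟩ s hs
      rw [hev h hh w s hs]
      exact hφb (t - h) w hw (s + h) (by linarith)
    · rintro a ha t u ⟨v, ⟨w, hw, rfl⟩, rfl⟩
      refine ⟨T a w, hinv a ha (t - h) ⟨w, by simpa [sub_sub, add_comm] using hw, rfl⟩, ?_⟩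
      rw [hsemi a h ha hh, hsemi h a hh ha, add_comm]
    · intro D hD t ε hε
      obtain ⟨C, hC, hCd⟩ := hlip h hh
      obtain ⟨τ₁, hτ₁⟩ := hattr D hD (t - h) (ε / C) (by positivity)
      refine ⟨min τ₁ (t - h), fun τ hτ u hu => ?_⟩
      obtain ⟨v, hv, hdv⟩ := hτ₁ τ (le_trans hτ (min_le_left _ _)) u hu
      refine ⟨T h v, ⟨v, hv, rfl⟩, ?_⟩
      have hτt : τ ≤ t - h := le_trans hτ (min_le_right _ _)
      have : T (t - τ) u = T h (T (t - h - τ) u) := by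
        rw [hsemi h (t - h - τ) hh (by linarith)]; ring_nf
      rw [this]
      calc dist (T h (T (t - h - τ) u)) (T h v) ≤ C * dist (T (t - h - τ) u) v :=
            hCd _ _
        _ < C * (ε / C) := by exact (mul_lt_mul_iff_right₀ hC).mpr hdv
        _ = ε := by field_simp
  refine Set.Subset.antisymm (hinv h hh t) (hmin P hPTSA t)
end

section
/- Let u ∈ C([0,∞);H) with u(0) = a satisfy, for all h ≥ 0, the energy inequality ‖u(h)‖² ≤ e^{−σh}(‖a‖² + (1/η)∫₀ʰ e^{σξ}‖F(ξ)‖²_{V*} dξ). Fix t ∈ ℝ, let R₁(s) = e^{σs} + (1/η)∫_{−∞}^s e^{σξ}‖f(ξ)‖²_{V*} dξ where f satisfies ∫_{−∞}^t e^{σξ}‖f(ξ)‖²_{V*}dξ < ∞, let r ∈ R (so e^{σ·}r² is increasing and e^{σs}r²(s) → 0 as s → −∞), and suppose ‖a‖ ≤ r(τ) and F = T(τ)f. Then for τ ≤ τ₀ := χ^{−1}(R₁(t)) with χ(s) = max{e^{σs}r²(s), R₁(s)}, the shifted function v = T(t−τ)u satisfies ‖v(h)‖² ≤ 2e^{−σ(t+h)}R₁(t+h)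 for all h ≥ 0. -/
open MeasureTheory Filter

/-- Pullback absorption estimate for the 3D Navier–Stokes energy inequality
(proof of Theorem 4.3): if `u` is an admissible weak solution of the problem shifted
by `τ` (only the energy inequality with the right-hand side `F = T(τ)f` is used),
with `‖u(0)‖ ≤ r(τ)` for `r` in the class `𝓡`, and if `τ ≤ t` satisfies
`χ(τ) ≤ R₁(t)` with `χ(s) = max{e^{σs}r²(s), R₁(s)}`, then the shifted solution
`v = T(t-τ)u` satisfies `‖v(h)‖² ≤ 2e^{-σ(t+h)}R₁(t+h)` for all `h ≥ 0`. -/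
theorem stmt10 {H Vs : Type*} [NormedAddCommGroup H] [NormedAddCommGroup Vs]
    (σ η : ℝ) (hσ : 0 < σ) (hη : 0 < η)
    (f : ℝ → Vs)
    (hInt : ∀ s : ℝ, IntegrableOn (fun ξ => Real.exp (σ * ξ) * ‖f ξ‖ ^ 2) (Set.Iic s))
    (R₁ : ℝ → ℝ)
    (hR₁ : ∀ s : ℝ, R₁ s =
      Real.exp (σ * s) + (1 / η) * ∫ ξ in Set.Iic s, Real.exp (σ * ξ) * ‖f ξ‖ ^ 2)
    (r : ℝ → ℝ) (hrpos : ∀ s, 0 < r s)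
    (hrmono : Monotone fun s => Real.exp (σ * s) * r s ^ 2)
    (hrlim : Tendsto (fun s => Real.exp (σ * s) * r s ^ 2) atBot (nhds 0))
    (t τ : ℝ) (hτt : τ ≤ t)
    (hχ : max (Real.exp (σ * τ) * r τ ^ 2) (R₁ τ) ≤ R₁ t)
    (u : ℝ → H)
    (ha : ‖u 0‖ ≤ r τ)
    (hener : ∀ h : ℝ, 0 ≤ h → ‖u h‖ ^ 2 ≤
      Real.exp (-(σ * h)) * (‖u 0‖ ^ 2 +
        (1 / η) * ∫ ξ in Set.Ioc (0:ℝ) h, Real.exp (σ * ξ) * ‖f (ξ + τ)‖ ^ 2)) :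
    ∀ h : ℝ, 0 ≤ h →
      ‖u (t - τ + h)‖ ^ 2 ≤ 2 * Real.exp (-(σ * (t + h))) * R₁ (t + h) := by
  intro h hh
  have hh' : (0:ℝ) ≤ t - τ + h := by linarith
  have key := hener (t - τ + h) hh'
  set G : ℝ → ℝ := fun ξ => Real.exp (σ * ξ) * ‖f ξ‖ ^ 2 with hG
  have hGnn : ∀ ξ, 0 ≤ G ξ := fun ξ => mul_nonneg (Real.exp_pos _).le (by positivity)
  -- change of variables in the integral
  have hsub : (∫ ξ in Set.Ioc (0:ℝ) (t - τ + h), Real.exp (σ * ξ) * ‖f (ξ + τ)‖ ^ 2)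
      = Real.exp (-(σ * τ)) * ∫ ξ in Set.Ioc τ (t + h), G ξ := by
    rw [← intervalIntegral.integral_of_le hh',
        ← intervalIntegral.integral_of_le (by linarith : τ ≤ t + h),
        ← intervalIntegral.integral_const_mul]
    have : (∫ x in (0:ℝ)..(t - τ + h), Real.exp (-(σ * τ)) * G (x + τ))
        = ∫ x in (0 + τ)..(t - τ + h + τ), Real.exp (-(σ * τ)) * G x :=
      intervalIntegral.integral_comp_add_right (fun x => Real.exp (-(σ * τ)) * G x) τ
    rw [show (0:ℝ) + τ = τ by ring, show t - τ + h + τ = t + h by ring] at this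
    rw [← this]
    congr 1
    funext ξ
    simp only [hG]
    rw [← mul_assoc, ← Real.exp_add, show -(σ * τ) + σ * (ξ + τ) = σ * ξ by ring]
  have hmono : ∀ a b : ℝ, a ≤ b → (∫ ξ in Set.Iic a, G ξ) ≤ ∫ ξ in Set.Iic b, G ξ := by
    intro a b hab
    exact setIntegral_mono_set (hInt b) (Filter.Eventually.of_forall hGnn)
      (HasSubset.Subset.eventuallyLE (Set.Iic_subset_Iic.2 hab))
  have hK : (∫ ξ in Set.Ioc τ (t + h), G ξ) ≤ ∫ ξ in Set.Iic (t + h), G ξ :=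
    setIntegral_mono_set (hInt (t + h)) (Filter.Eventually.of_forall hGnn)
      (HasSubset.Subset.eventuallyLE (Set.Ioc_subset_Iic_self))
  have hInn : 0 ≤ ∫ ξ in Set.Iic (t + h), G ξ :=
    setIntegral_nonneg measurableSet_Iic (fun ξ _ => hGnn ξ)
  have hR1mono : R₁ t ≤ R₁ (t + h) := by
    rw [hR₁ t, hR₁ (t + h)]
    have h1 : Real.exp (σ * t) ≤ Real.exp (σ * (t + h)) :=
      Real.exp_le_exp.2 (by nlinarith)
    have h2 := hmono t (t + h) (by linarith)
    have : (0:ℝ) < 1 / η := by positivity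
    nlinarith
  have hχ1 : Real.exp (σ * τ) * r τ ^ 2 ≤ R₁ (t + h) :=
    le_trans (le_trans (le_max_left _ _) hχ) hR1mono
  have hIb : (1 / η) * (∫ ξ in Set.Iic (t + h), G ξ) ≤ R₁ (t + h) := by
    rw [hR₁ (t + h)]
    have := (Real.exp_pos (σ * (t + h))).le
    linarith
  have hA : ‖u 0‖ ^ 2 ≤ r τ ^ 2 := by
    have := norm_nonneg (u 0)
    nlinarith
  have hE : Real.exp (-(σ * (t - τ + h))) = Real.exp (-(σ * (t + h))) * Real.exp (σ * τ) := by
    rw [← Real.exp_add]; ring_nf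
  rw [hsub, hE] at key
  have hEp := (Real.exp_pos (-(σ * (t + h)))).le
  have hEtp := (Real.exp_pos (σ * τ)).le
  calc ‖u (t - τ + h)‖ ^ 2
      ≤ Real.exp (-(σ * (t + h))) * Real.exp (σ * τ) *
        (‖u 0‖ ^ 2 + 1 / η * (Real.exp (-(σ * τ)) * ∫ ξ in Set.Ioc τ (t + h), G ξ)) := key
    _ = Real.exp (-(σ * (t + h))) *
        (Real.exp (σ * τ) * ‖u 0‖ ^ 2 +
          Real.exp (σ * τ) * Real.exp (-(σ * τ)) * (1 / η * ∫ ξ in Set.Ioc τ (t + h), G ξ)) := by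
        ring
    _ = Real.exp (-(σ * (t + h))) *
        (Real.exp (σ * τ) * ‖u 0‖ ^ 2 + 1 / η * ∫ ξ in Set.Ioc τ (t + h), G ξ) := by
        rw [← Real.exp_add]; simp
    _ ≤ Real.exp (-(σ * (t + h))) * (R₁ (t + h) + R₁ (t + h)) := by
        apply mul_le_mul_of_nonneg_left _ hEp
        have h3 : Real.exp (σ * τ) * ‖u 0‖ ^ 2 ≤ R₁ (t + h) :=
          le_trans (by nlinarith) hχ1
        have h4 : 1 / η * (∫ ξ in Set.Ioc τ (t + h), G ξ) ≤ R₁ (t + h) := by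
          have : (0:ℝ) ≤ 1 / η := by positivity
          calc 1 / η * (∫ ξ in Set.Ioc τ (t + h), G ξ)
              ≤ 1 / η * ∫ ξ in Set.Iic (t + h), G ξ := by nlinarith
            _ ≤ R₁ (t + h) := hIb
        linarith
    _ = 2 * Real.exp (-(σ * (t + h))) * R₁ (t + h) := by ring
end

section
/- Let τ₀: D × ℝ → ℝ with τ₀(D,·) non-decreasing for each D, and define P⁰_t = ⋃_{D∈D} ⋃_{τ ≤ τ₀(D,t)} T(t−τ)H_τ(D). Then T(h)P⁰_{t−h} ⊂ P⁰_t for all h ≥ 0 and t ∈ ℝ, and consequently the closures P_t of P⁰_t in C([0,∞);E₀) satisfy T(h)P_{t−h} ⊂ P_t. -/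
/-- From the proof of Lemma 3.18: let `X` model the trajectory space `C([0,∞);E₀)`,
`T` the (continuous) translation semigroup, `H` the trajectory brochette, `ev0` the
evaluation at `0` with values in `E`, `𝒟` a class of brochettes over `E`, and
`τ₀(D,t) ≤ t` nondecreasing in `t`.  Set
`P⁰_t = ⋃_{D ∈ 𝒟} ⋃_{τ ≤ τ₀(D,t)} T(t-τ)H_τ(D)`.  Then `T(h)P⁰_{t-h} ⊆ P⁰_t` for all
`h ≥ 0`, and consequently the closures satisfy `T(h) (cl P⁰_{t-h}) ⊆ cl P⁰_t`. -/
theorem stmt18 {X E : Type*} [MetricSpace X]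
    (T : ℝ → X → X)
    (hsemi : ∀ a b : ℝ, 0 ≤ a → 0 ≤ b → ∀ u, T a (T b u) = T (a + b) u)
    (hcont : ∀ h : ℝ, 0 ≤ h → Continuous (T h))
    (ev0 : X → E) (H : ℝ → Set X) (𝒟 : Set (ℝ → Set E))
    (τ₀ : (ℝ → Set E) → ℝ → ℝ)
    (hτmono : ∀ D, Monotone (τ₀ D))
    (hτle : ∀ D t, τ₀ D t ≤ t)
    (P0 : ℝ → Set X)
    (hP0 : ∀ t : ℝ, P0 t =
      ⋃ D ∈ 𝒟, ⋃ τ ∈ Set.Iic (τ₀ D t), T (t - τ) '' {u ∈ H τ | ev0 u ∈ D τ}) :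
    ∀ h : ℝ, 0 ≤ h → ∀ t : ℝ,
      T h '' P0 (t - h) ⊆ P0 t ∧
      T h '' closure (P0 (t - h)) ⊆ closure (P0 t) := by
  intro h hh t
  have h1 : T h '' P0 (t - h) ⊆ P0 t := by
    rintro x ⟨u, hu, rfl⟩
    rw [hP0] at hu ⊢
    simp only [Set.mem_iUnion] at hu ⊢
    obtain ⟨D, hD, τ, hτ, v, hv, rfl⟩ := hu
    have hτt : τ ≤ τ₀ D t := hτ.trans (hτmono D (by linarith))
    have h0 : (0:ℝ) ≤ t - h - τ := by
      have := hτle D (t - h); simp only [Set.mem_Iic] at hτ; linarith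
    refine ⟨D, hD, τ, by simpa using hτt, v, hv, ?_⟩
    rw [hsemi h (t - h - τ) hh h0]
    ring_nf
  refine ⟨h1, ?_⟩
  calc T h '' closure (P0 (t - h))
      ⊆ closure (T h '' P0 (t - h)) := image_closure_subset_closure_image (hcont h hh)
    _ ⊆ closure (P0 t) := closure_mono h1
end
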